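/- Suppose k ≥ 6 and let D̂ ⊆ E be a path covering, i.e., every vertex of 𝒯^k belongs to exactly two edges of D̂. Then d_{D̂} = 2 < (k-1)/2, and σ^{D̂+} and σ^{D̂-} are ground state configurations; moreover, for every finite nonempty connected set C ⊆ V, H(σ_C) - H(σ^{D̂+}) ≥ 2J(k-5)|C| > 0. -/

import Mathlib

open Classical

/-- `G` is a Cayley tree with branching number `k`: an infinite connected acyclic
simple graph in which every vertex has exactly `k + 1` neighbors. -/
structure IsCayleyTree {V : Type*} (G : SimpleGraph V) (k : ℕ) : Prop where
  infinite : Infinite V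
  connected : G.Connected
  acyclic : G.IsAcyclic
  degree : ∀ v : V, (G.neighborSet v).ncard = k + 1

/-- A spin configuration takes values in `{-1, +1}`. -/
def IsSpin {V : Type*} (σ : V → ℤ) : Prop := ∀ v, σ v = 1 ∨ σ v = -1

/-- `σ` is frustrated exactly on the edges of `D`: for every edge `{x,y}` of `G`,
`σ x * σ y = -1` if `{x,y} ∈ D` and `σ x * σ y = 1` otherwise. -/
def SatisfiesD {V : Type*} (G : SimpleGraph V) (D : Set (Sym2 V)) (σ : V → ℤ) : Prop :=
  ∀ x y : V, G.Adj x y →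
    (s(x, y) ∈ D → σ x * σ y = -1) ∧ (s(x, y) ∉ D → σ x * σ y = 1)

/-- The excess energy `H(σ) - H(σbase) = J * Σ_{{x,y} ∈ E} (σbase x * σbase y - σ x * σ y)`,
a sum with finitely many nonzero terms when `σ` and `σbase` differ at finitely many sites. -/
noncomputable def excessEnergy {V : Type*} (G : SimpleGraph V) (J : ℝ) (σ σbase : V → ℤ) : ℝ :=
  J * ∑ᶠ e ∈ G.edgeSet,
      ((Sym2.lift ⟨fun x y => σbase x * σbase y - σ x * σ y, fun _ _ => by ring⟩ e : ℤ) : ℝ)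

/-- The configuration obtained from `σ` by flipping all spins in `C`. -/
noncomputable def flipSpins {V : Type*} (σ : V → ℤ) (C : Set V) : V → ℤ :=
  fun v => if v ∈ C then -σ v else σ v

/-- The number `d_D(v)` of edges of `D` incident to the vertex `v`. -/
noncomputable def incidentCount {V : Type*} (D : Set (Sym2 V)) (v : V) : ℕ :=
  {e ∈ D | v ∈ e}.ncard

/-- A set of vertices is connected if any two of its vertices are joined by a
walk staying within the set. -/
def SetConnected {V : Type*} (G : SimpleGraph V) (S : Set V) : Prop :=
  ∀ x ∈ S, ∀ y ∈ S, ∃ p : G.Walk x y, ∀ z ∈ p.support, z ∈ S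



section Parent

variable {V : Type*} {G : SimpleGraph V}

/-- The second vertex on the canonical path from `v` to `root`. -/
noncomputable def myParent (hconn : G.Connected) (root : V) (v : V) : V :=
  (((hconn.preconnected v root).some.toPath : G.Walk v root)).getVert 1

theorem myParent_eq (hconn : G.Connected) (hac : G.IsAcyclic) (root : V) {v : V}
    (q : G.Walk v root) (hq : q.IsPath) : q.getVert 1 = myParent hconn root v := by
  have h := (SimpleGraph.isAcyclic_iff_path_unique.mp hac)
    (⟨q, hq⟩ : G.Path v root) ((hconn.preconnected v root).some.toPath)
  exact congrArg (fun p : G.Path v root => (p : G.Walk v root).getVert 1) h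

theorem myParent_adj_or (hconn : G.Connected) (hac : G.IsAcyclic) (root : V) {v w : V}
    (h : G.Adj v w) : myParent hconn root v = w ∨ myParent hconn root w = v := by
  set pw : G.Path w root := (hconn.preconnected w root).some.toPath with hpwdef
  by_cases hv : v ∈ (pw : G.Walk w root).support
  · right
    have ht : ((pw : G.Walk w root).takeUntil v hv).IsPath := pw.2.takeUntil hv
    have hsingle : (SimpleGraph.Walk.cons h.symm SimpleGraph.Walk.nil : G.Walk w v).IsPath := by
      simp [SimpleGraph.Walk.cons_isPath_iff, h.ne']
    have h2 : (⟨(pw : G.Walk w root).takeUntil v hv, ht⟩ : G.Path w v)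
        = ⟨SimpleGraph.Walk.cons h.symm SimpleGraph.Walk.nil, hsingle⟩ :=
      (SimpleGraph.isAcyclic_iff_path_unique.mp hac) _ _
    have h3 : (pw : G.Walk w root).takeUntil v hv
        = SimpleGraph.Walk.cons h.symm SimpleGraph.Walk.nil := congrArg Subtype.val h2
    have h4 := (pw : G.Walk w root).take_spec hv
    rw [h3] at h4
    have h5 : (pw : G.Walk w root).getVert 1 = v := by
      rw [← h4]
      simp [SimpleGraph.Walk.cons_append, SimpleGraph.Walk.nil_append,
        SimpleGraph.Walk.getVert_cons_succ, SimpleGraph.Walk.getVert_zero]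
    rw [← myParent_eq hconn hac root (pw : G.Walk w root) pw.2]
    exact h5
  · left
    have hq : (SimpleGraph.Walk.cons h (pw : G.Walk w root)).IsPath := pw.2.cons hv
    have h6 := myParent_eq hconn hac root _ hq
    rw [show (1 : ℕ) = 0 + 1 from rfl, SimpleGraph.Walk.getVert_cons_succ,
      SimpleGraph.Walk.getVert_zero] at h6
    exact h6.symm

end Parent

theorem excess_bound {V : Type*} (G : SimpleGraph V) (k : ℕ) (hk : 6 ≤ k)
    (hG : IsCayleyTree G k) (root : V) (J : ℝ) (hJ : 0 < J)
    (Dhat : Set (Sym2 V))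
    (hpath : ∀ v : V, incidentCount Dhat v = 2)
    (σ : V → ℤ) (hσ : IsSpin σ) (hσD : SatisfiesD G Dhat σ)
    (C : Set V) (hC : C.Finite) :
    excessEnergy G J (flipSpins σ C) σ ≥ 2 * J * ((k : ℝ) - 5) * (C.ncard : ℝ) := by
  classical
  have hfin : ∀ v, (G.neighborSet v).Finite := fun v =>
    Set.finite_of_ncard_ne_zero (by rw [hG.degree v]; omega)
  have hDfin : ∀ v, {e ∈ Dhat | v ∈ e}.Finite := fun v =>
    Set.finite_of_ncard_ne_zero (by have := hpath v; unfold incidentCount at this; omega)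
  set nb : V → Finset V := fun v => (hfin v).toFinset with hnb
  have hnbcard : ∀ v, (nb v).card = k + 1 := fun v => by
    rw [← Set.ncard_eq_toFinset_card _ (hfin v), hG.degree v]
  have hnb_mem : ∀ v w, w ∈ nb v ↔ G.Adj v w := fun v w => by
    simp [hnb, Set.Finite.mem_toFinset]
  set Cf : Finset V := hC.toFinset with hCfdef
  have hCf : ∀ x, x ∈ Cf ↔ x ∈ C := fun x => Set.Finite.mem_toFinset _
  set B : Finset (V × V) := Cf.biUnion (fun v => (nb v \ Cf).image (fun w => (v, w))) with hBdef
  have hBmem : ∀ p : V × V, p ∈ B ↔ p.1 ∈ Cf ∧ p.2 ∈ nb p.1 \ Cf := by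
    rintro ⟨v, w⟩
    simp only [hBdef, Finset.mem_biUnion, Finset.mem_image]
    constructor
    · rintro ⟨a, ha, b, hb, hab⟩
      obtain ⟨rfl, rfl⟩ : a = v ∧ b = w := by
        constructor <;> [exact congrArg Prod.fst hab; exact congrArg Prod.snd hab]
      exact ⟨ha, hb⟩
    · rintro ⟨h1, h2⟩; exact ⟨v, h1, w, h2, rfl⟩
  -- parent map and internal-edge bound
  set par : V → V := myParent hG.connected root with hpar
  have key : ∀ {v w}, G.Adj v w → par v = w ∨ par w = v := fun h =>
    myParent_adj_or hG.connected hG.acyclic root h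
  have hInt : ∑ v ∈ Cf, (nb v ∩ Cf).card ≤ 2 * Cf.card := by
    have h1 : ∀ v ∈ Cf, (nb v ∩ Cf).card ≤ 1 + (Cf.filter (fun w => par w = v)).card := by
      intro v _
      have hsub : nb v ∩ Cf ⊆ insert (par v) (Cf.filter (fun w => par w = v)) := by
        intro w hw
        rcases Finset.mem_inter.mp hw with ⟨hw1, hw2⟩
        rcases key ((hnb_mem v w).mp hw1) with h | h
        · exact Finset.mem_insert.mpr (Or.inl h.symm)
        · exact Finset.mem_insert.mpr (Or.inr (Finset.mem_filter.mpr ⟨hw2, h⟩))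
      calc (nb v ∩ Cf).card ≤ _ := Finset.card_le_card hsub
        _ ≤ 1 + (Cf.filter (fun w => par w = v)).card := by
            simpa [add_comm] using Finset.card_insert_le (par v) (Cf.filter (fun w => par w = v))
    have h2 : ∑ v ∈ Cf, (Cf.filter (fun w => par w = v)).card ≤ Cf.card := by
      have hmap : ∀ x ∈ Cf, par x ∈ Cf ∪ Cf.image par := fun x hx =>
        Finset.mem_union_right _ (Finset.mem_image_of_mem _ hx)
      rw [Finset.card_eq_sum_card_fiberwise hmap]
      exact Finset.sum_le_sum_of_subset Finset.subset_union_left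
    calc ∑ v ∈ Cf, (nb v ∩ Cf).card
        ≤ ∑ v ∈ Cf, (1 + (Cf.filter (fun w => par w = v)).card) := Finset.sum_le_sum h1
      _ = Cf.card + ∑ v ∈ Cf, (Cf.filter (fun w => par w = v)).card := by
          rw [Finset.sum_add_distrib, Finset.sum_const, smul_eq_mul, mul_one]
      _ ≤ Cf.card + Cf.card := by omega
      _ = 2 * Cf.card := by ring
  -- cardinality of B
  have hBcard : B.card = ∑ v ∈ Cf, (nb v \ Cf).card := by
    rw [hBdef, Finset.card_biUnion]
    · exact Finset.sum_congr rfl fun v _ =>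
        Finset.card_image_of_injective _ (fun a b h => congrArg Prod.snd h)
    · intro x _ y _ hxy
      rw [Function.onFun, Finset.disjoint_left]
      rintro p hp hq
      obtain ⟨a, _, rfl⟩ := Finset.mem_image.mp hp
      obtain ⟨b, _, hb⟩ := Finset.mem_image.mp hq
      exact hxy (congrArg Prod.fst hb).symm
  have hBlb : ((k : ℤ) - 1) * Cf.card ≤ (B.card : ℤ) := by
    have hterm : ∀ v ∈ Cf, ((nb v \ Cf).card : ℤ) = (k : ℤ) + 1 - ((nb v ∩ Cf).card : ℤ) := by
      intro v _
      have := Finset.card_sdiff_add_card_inter (nb v) Cf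
      rw [hnbcard v] at this
      omega
    have hsum : (B.card : ℤ) = ∑ v ∈ Cf, (((k : ℤ) + 1) - ((nb v ∩ Cf).card : ℤ)) := by
      rw [hBcard]
      push_cast
      exact Finset.sum_congr rfl hterm
    rw [hsum, Finset.sum_sub_distrib, Finset.sum_const, nsmul_eq_mul]
    have hIntZ : (∑ v ∈ Cf, ((nb v ∩ Cf).card : ℤ)) ≤ 2 * (Cf.card : ℤ) := by
      exact_mod_cast hInt
    nlinarith [hIntZ]
  -- injectivity of the edge map on B
  have hinj : ∀ p ∈ B, ∀ q ∈ B, s(p.1, p.2) = s(q.1, q.2) → p = q := by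
    rintro ⟨a, b⟩ hp ⟨c, d⟩ hq h
    obtain ⟨ha, hb⟩ := (hBmem _).mp hp
    obtain ⟨hc, hd⟩ := (hBmem _).mp hq
    rcases Sym2.eq_iff.mp h with ⟨rfl, rfl⟩ | ⟨rfl, rfl⟩
    · rfl
    · exact absurd hc (Finset.mem_sdiff.mp hb).2
  set BD : Finset (V × V) := B.filter (fun p => s(p.1, p.2) ∈ Dhat) with hBDdef
  have hBDub : (BD.card : ℤ) ≤ 2 * (Cf.card : ℤ) := by
    have himg : BD.image (fun p : V × V => s(p.1, p.2)) ⊆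
        Cf.biUnion (fun v => (hDfin v).toFinset) := by
      intro e he
      obtain ⟨p, hp, rfl⟩ := Finset.mem_image.mp he
      obtain ⟨hpB, hpD⟩ := Finset.mem_filter.mp hp
      obtain ⟨h1, _⟩ := (hBmem _).mp hpB
      refine Finset.mem_biUnion.mpr ⟨p.1, h1, ?_⟩
      rw [Set.Finite.mem_toFinset]
      exact ⟨hpD, Sym2.mem_mk_left _ _⟩
    have hc1 : BD.card = (BD.image (fun p : V × V => s(p.1, p.2))).card :=
      (Finset.card_image_of_injOn (fun p hp q hq h =>
        hinj p (Finset.mem_filter.mp hp).1 q (Finset.mem_filter.mp hq).1 h)).symm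
    have hc2 : (Cf.biUnion (fun v => (hDfin v).toFinset)).card ≤ ∑ v ∈ Cf, 2 := by
      refine le_trans Finset.card_biUnion_le (Finset.sum_le_sum fun v _ => ?_)
      rw [← Set.ncard_eq_toFinset_card _ (hDfin v)]
      exact le_of_eq (hpath v)
    have hle := le_trans (hc1 ▸ Finset.card_le_card himg) (by simpa using hc2)
    have : BD.card ≤ 2 * Cf.card := by omega
    exact_mod_cast this
  -- the summand function
  set f : Sym2 V → ℝ := fun e =>
    ((Sym2.lift ⟨fun x y => σ x * σ y - flipSpins σ C x * flipSpins σ C y,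
      fun _ _ => by ring⟩ e : ℤ) : ℝ) with hfdef
  set BndF : Finset (Sym2 V) := B.image (fun p : V × V => s(p.1, p.2)) with hBndF
  have hBadj : ∀ p ∈ B, G.Adj p.1 p.2 := fun p hp =>
    (hnb_mem p.1 p.2).mp (Finset.mem_sdiff.mp ((hBmem p).mp hp).2).1
  have hstep : ∑ᶠ e ∈ G.edgeSet, f e = ∑ e ∈ BndF, f e := by
    apply finsum_mem_eq_sum_of_inter_support_eq
    apply Set.eq_of_subset_of_subset
    · rintro e ⟨he, hsupp⟩
      refine ⟨?_, hsupp⟩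
      induction e using Sym2.ind with
      | _ x y =>
        have hadj : G.Adj x y := he
        rw [Function.mem_support, hfdef] at hsupp
        simp only [Sym2.lift_mk] at hsupp
        have hne : σ x * σ y - flipSpins σ C x * flipSpins σ C y ≠ 0 := by
          intro h0; exact hsupp (by rw [h0]; simp)
        by_cases hx : x ∈ C <;> by_cases hy : y ∈ C
        · exact absurd (by simp [flipSpins, hx, hy]) hne
        · refine Finset.mem_coe.mpr (Finset.mem_image.mpr ⟨(x, y), (hBmem _).mpr ⟨?_, ?_⟩, rfl⟩)
          · exact (hCf x).mpr hx
          · exact Finset.mem_sdiff.mpr ⟨(hnb_mem x y).mpr hadj, fun h => hy ((hCf y).mp h)⟩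
        · have : s(y, x) ∈ BndF :=
            Finset.mem_image.mpr ⟨(y, x), (hBmem _).mpr ⟨(hCf y).mpr hy,
              Finset.mem_sdiff.mpr ⟨(hnb_mem y x).mpr hadj.symm, fun h => hx ((hCf x).mp h)⟩⟩, rfl⟩
          exact Finset.mem_coe.mpr (by rwa [Sym2.eq_swap])
        · exact absurd (by simp [flipSpins, hx, hy]) hne
    · rintro e ⟨he, hsupp⟩
      refine ⟨?_, hsupp⟩
      obtain ⟨p, hp, rfl⟩ := Finset.mem_image.mp (Finset.mem_coe.mp he)
      exact (hBadj p hp : G.Adj p.1 p.2)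
  have hptwise : ∀ p ∈ B, f s(p.1, p.2) = if s(p.1, p.2) ∈ Dhat then (-2 : ℝ) else 2 := by
    rintro ⟨v, w⟩ hp
    obtain ⟨h1, h2⟩ := (hBmem _).mp hp
    have hvC : v ∈ C := (hCf v).mp h1
    have hwC : w ∉ C := fun h => (Finset.mem_sdiff.mp h2).2 ((hCf w).mpr h)
    have hadj : G.Adj v w := hBadj _ hp
    have hval : f s(v, w) = ((2 * (σ v * σ w) : ℤ) : ℝ) := by
      rw [hfdef]; simp only [Sym2.lift_mk]
      congr 1
      simp [flipSpins, hvC, hwC]; ring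
    by_cases hD : s(v, w) ∈ Dhat
    · rw [if_pos hD, hval, (hσD v w hadj).1 hD]; norm_num
    · rw [if_neg hD, hval, (hσD v w hadj).2 hD]; norm_num
  have hsumB : ∑ e ∈ BndF, f e = ∑ p ∈ B, (if s(p.1, p.2) ∈ Dhat then (-2 : ℝ) else 2) := by
    rw [hBndF, Finset.sum_image hinj]
    exact Finset.sum_congr rfl hptwise
  have hsplit : ∑ p ∈ B, (if s(p.1, p.2) ∈ Dhat then (-2 : ℝ) else 2)
      = (-2 : ℝ) * BD.card + 2 * (B.filter (fun p => ¬ s(p.1, p.2) ∈ Dhat)).card := by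
    rw [Finset.sum_ite, Finset.sum_const, Finset.sum_const, hBDdef]
    push_cast
    ring
  have hcards : BD.card + (B.filter (fun p => ¬ s(p.1, p.2) ∈ Dhat)).card = B.card := by
    rw [hBDdef]
    exact Finset.card_filter_add_card_filter_not _
  -- put it together
  have hCcard : (C.ncard : ℝ) = (Cf.card : ℝ) := by
    rw [Set.ncard_eq_toFinset_card _ hC]
  have hS : ∑ᶠ e ∈ G.edgeSet, f e ≥ (2 * (k : ℝ) - 10) * Cf.card := by
    rw [hstep, hsumB, hsplit]
    have e1 : ((B.filter (fun p => ¬ s(p.1, p.2) ∈ Dhat)).card : ℝ)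
        = (B.card : ℝ) - (BD.card : ℝ) := by
      have := hcards; push_cast [← this]; ring
    rw [e1]
    have hBlbR : ((k : ℝ) - 1) * Cf.card ≤ (B.card : ℝ) := by exact_mod_cast hBlb
    have hBDubR : (BD.card : ℝ) ≤ 2 * Cf.card := by exact_mod_cast hBDub
    nlinarith
  have hEE : excessEnergy G J (flipSpins σ C) σ = J * ∑ᶠ e ∈ G.edgeSet, f e := rfl
  rw [hEE, hCcard]
  have := mul_le_mul_of_nonneg_left hS hJ.le
  nlinarith

/-- For `k ≥ 6` and a path covering `D̂`, one has `d_{D̂} = 2 < (k-1)/2`,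
the configurations `σ^{D̂+}` and `σ^{D̂-}` are ground state configurations, and for
every finite nonempty connected `C`, `H(σ_C) - H(σ^{D̂+}) ≥ 2J(k-5)|C| > 0`. -/
theorem path_covering_ground_states {V : Type*} (G : SimpleGraph V) (k : ℕ) (hk : 6 ≤ k)
    (hG : IsCayleyTree G k) (root : V) (J : ℝ) (hJ : 0 < J)
    (Dhat : Set (Sym2 V)) (hDhat : Dhat ⊆ G.edgeSet)
    (hpath : ∀ v : V, incidentCount Dhat v = 2)
    (σ : V → ℤ) (hσ : IsSpin σ) (hσroot : σ root = 1) (hσD : SatisfiesD G Dhat σ) :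
    (⨆ v, incidentCount Dhat v) = 2
      ∧ (2 : ℝ) < ((k : ℝ) - 1) / 2
      ∧ (∀ τ : V → ℤ, IsSpin τ → {v : V | τ v ≠ σ v}.Finite →
          0 ≤ excessEnergy G J τ σ)
      ∧ (∀ τ : V → ℤ, IsSpin τ → {v : V | τ v ≠ -σ v}.Finite →
          0 ≤ excessEnergy G J τ (fun v => -σ v))
      ∧ (∀ C : Set V, C.Finite → C.Nonempty → SetConnected G C →
          excessEnergy G J (flipSpins σ C) σ ≥ 2 * J * ((k : ℝ) - 5) * (C.ncard : ℝ)
            ∧ 0 < excessEnergy G J (flipSpins σ C) σ) := by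
  have hk6 : (6 : ℝ) ≤ (k : ℝ) := by exact_mod_cast hk
  have hknn : (0 : ℝ) ≤ (k : ℝ) - 5 := by linarith
  refine ⟨?_, ?_, ?_, ?_, ?_⟩
  · haveI : Infinite V := hG.infinite
    haveI : Nonempty V := inferInstance
    simp only [hpath]
    exact ciSup_const
  · linarith
  · intro τ hτ hfin
    have hτeq : τ = flipSpins σ {v : V | τ v ≠ σ v} := by
      funext v
      by_cases h : τ v = σ v
      · simp [flipSpins, h]
      · have h1 := hσ v
        have h2 := hτ v
        simp only [flipSpins, Set.mem_setOf_eq, h, if_true, not_false_iff]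
        rw [if_pos h]
        omega
    rw [hτeq]
    refine le_trans ?_ (excess_bound G k hk hG root J hJ Dhat hpath σ hσ hσD _ hfin)
    positivity
  · intro τ hτ hfin
    have hσ' : IsSpin (fun v => -σ v) := fun v => by rcases hσ v with h | h <;> simp [h]
    have hσD' : SatisfiesD G Dhat (fun v => -σ v) := by
      intro x y h
      have h2 := hσD x y h
      constructor
      · intro hD
        have : -σ x * -σ y = σ x * σ y := by ring
        rw [this]; exact h2.1 hD
      · intro hD
        have : -σ x * -σ y = σ x * σ y := by ring
        rw [this]; exact h2.2 hD
    have hτeq : τ = flipSpins (fun v => -σ v) {v : V | τ v ≠ -σ v} := by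
      funext v
      by_cases h : τ v = -σ v
      · simp [flipSpins, h]
      · have h1 := hσ v
        have h2 := hτ v
        simp only [flipSpins, Set.mem_setOf_eq]
        rw [if_pos h]
        omega
    rw [hτeq]
    refine le_trans ?_ (excess_bound G k hk hG root J hJ Dhat hpath _ hσ' hσD' _ hfin)
    positivity
  · intro C hCfin hCne _
    have hb := excess_bound G k hk hG root J hJ Dhat hpath σ hσ hσD C hCfin
    refine ⟨hb, lt_of_lt_of_le ?_ hb⟩
    have hcard : 0 < (C.ncard : ℝ) := by
      exact_mod_cast (Set.ncard_pos hCfin).mpr hCne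
    have : (0:ℝ) < (k : ℝ) - 5 := by linarith
    positivity
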